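/- Let d₁, d₂ be integers not divisible by 3. For j = 1, 2, let α_j, β_j ∈ 𝔽₃ and set M_j := α_j·I + β_j·[[0, (d_j − 1)·4⁻¹],[1, −1]] ∈ M₂(𝔽₃), where d_j is reduced mod 3 and 4⁻¹ = 1 in 𝔽₃. Assume det M₁ = det M₂ and this common determinant is nonzero (so M₁, M₂ ∈ GL₂(𝔽₃)). Then the pair (M₁, M₂) lies in the subgroup of GL₂(𝔽₃) × GL₂(𝔽₃) generated by the set {(u, v) : u, v ∈ N′} ∪ {(T, T)} ∪ {(D₀, D₀)}, where T := [[1,1],[0,1]] and D₀ := [[1,0],[0,−1]]. -/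
import Mathlib


open Matrix MatrixGroups

/-- `SL₂(𝔽₃)`. -/
abbrev SL2F3 := Matrix.SpecialLinearGroup (Fin 2) (ZMod 3)

/-- The matrix `−I` in `SL₂(𝔽₃)`. -/
def negI : SL2F3 := ⟨!![-1, 0; 0, -1], by decide⟩

/-- The matrix `T = [[1,1],[0,1]]` in `SL₂(𝔽₃)`. -/
def Tmat : SL2F3 := ⟨!![1, 1; 0, 1], by decide⟩

/-- The subset `N′ = {I, −I} ∪ {g ∈ SL₂(𝔽₃) : tr(g) = 0}`. -/
def Nprime : Set SL2F3 :=
  {1, negI} ∪ {g : SL2F3 | Matrix.trace (g : Matrix (Fin 2) (Fin 2) (ZMod 3)) = 0}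

/-- `D₀ = [[1,0],[0,−1]]` as an element of `GL₂(𝔽₃)`. -/
def D0 : GL (Fin 2) (ZMod 3) :=
  Matrix.GeneralLinearGroup.mkOfDetNeZero !![1, 0; 0, -1] (by decide)

/-- The generating set `{(u, v) : u, v ∈ N′} ∪ {(T, T)} ∪ {(D₀, D₀)}` inside
`GL₂(𝔽₃) × GL₂(𝔽₃)`. -/
def genPairs : Set (GL (Fin 2) (ZMod 3) × GL (Fin 2) (ZMod 3)) :=
  {p | ∃ u ∈ Nprime, ∃ v ∈ Nprime,
      p = (Matrix.SpecialLinearGroup.toGL u, Matrix.SpecialLinearGroup.toGL v)}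
    ∪ {(Matrix.SpecialLinearGroup.toGL Tmat, Matrix.SpecialLinearGroup.toGL Tmat)}
    ∪ {(D0, D0)}

set_option maxRecDepth 40000

/-- Auxiliary predicate: membership in `N′` at the level of matrices. -/
def isNmat (m : Matrix (Fin 2) (Fin 2) (ZMod 3)) : Prop :=
  m = 1 ∨ m = !![-1, 0; 0, -1] ∨ Matrix.trace m = 0

instance : DecidablePred isNmat := fun m => by unfold isNmat; infer_instance

/-- `T^(3-i) * T^i = 1`. -/
lemma Tpow_cancel (i : Fin 3) :
    (!![1, 1; 0, 1] : Matrix (Fin 2) (Fin 2) (ZMod 3)) ^ (3 - (i : ℕ))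
      * !![1, 1; 0, 1] ^ (i : ℕ) = 1 := by
  rw [← pow_add, Nat.sub_add_cancel (by omega : (i : ℕ) ≤ 3)]
  decide

/-- `D^ε * D^ε = 1`. -/
lemma Dpow_cancel (ε : Fin 2) :
    (!![1, 0; 0, -1] : Matrix (Fin 2) (Fin 2) (ZMod 3)) ^ (ε : ℕ)
      * !![1, 0; 0, -1] ^ (ε : ℕ) = 1 := by
  rw [← pow_add, ← two_mul, pow_mul,
    show (!![1, 0; 0, -1] : Matrix (Fin 2) (Fin 2) (ZMod 3)) ^ 2 = 1 from by decide, one_pow]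

/-- Master lemma: a pair `(A, B)` of invertible matrices lies in the closure of `genPairs`
as soon as there are `i, ε` with `A ⋅ D^ε ⋅ T^(3-i)` and `B ⋅ D^ε ⋅ T^(3-i)` both in `N′`. -/
lemma master (A B : Matrix (Fin 2) (Fin 2) (ZMod 3)) (hA : A.det ≠ 0) (hB : B.det ≠ 0)
    (h : ∃ i : Fin 3, ∃ ε : Fin 2,
      (A * !![1, 0; 0, -1] ^ (ε : ℕ) * !![1, 1; 0, 1] ^ (3 - (i : ℕ))).det = 1 ∧
      (B * !![1, 0; 0, -1] ^ (ε : ℕ) * !![1, 1; 0, 1] ^ (3 - (i : ℕ))).det = 1 ∧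
      isNmat (A * !![1, 0; 0, -1] ^ (ε : ℕ) * !![1, 1; 0, 1] ^ (3 - (i : ℕ))) ∧
      isNmat (B * !![1, 0; 0, -1] ^ (ε : ℕ) * !![1, 1; 0, 1] ^ (3 - (i : ℕ)))) :
    (Matrix.GeneralLinearGroup.mkOfDetNeZero A hA,
      Matrix.GeneralLinearGroup.mkOfDetNeZero B hB) ∈ Subgroup.closure genPairs := by
  obtain ⟨i, ε, hd1, hd2, hn1, hn2⟩ := h
  set m₁ : Matrix (Fin 2) (Fin 2) (ZMod 3) :=
    A * !![1, 0; 0, -1] ^ (ε : ℕ) * !![1, 1; 0, 1] ^ (3 - (i : ℕ)) with hm₁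
  set m₂ : Matrix (Fin 2) (Fin 2) (ZMod 3) :=
    B * !![1, 0; 0, -1] ^ (ε : ℕ) * !![1, 1; 0, 1] ^ (3 - (i : ℕ)) with hm₂
  have hA' : A = m₁ * !![1, 1; 0, 1] ^ (i : ℕ) * !![1, 0; 0, -1] ^ (ε : ℕ) := by
    rw [hm₁, mul_assoc (A * !![1, 0; 0, -1] ^ (ε : ℕ)), Tpow_cancel, mul_one,
      mul_assoc, Dpow_cancel, mul_one]
  have hB' : B = m₂ * !![1, 1; 0, 1] ^ (i : ℕ) * !![1, 0; 0, -1] ^ (ε : ℕ) := by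
    rw [hm₂, mul_assoc (B * !![1, 0; 0, -1] ^ (ε : ℕ)), Tpow_cancel, mul_one,
      mul_assoc, Dpow_cancel, mul_one]
  set q₁ : SL2F3 := ⟨m₁, hd1⟩
  set q₂ : SL2F3 := ⟨m₂, hd2⟩
  have hq₁ : q₁ ∈ Nprime := by
    rcases hn1 with h | h | h
    · exact Or.inl (Or.inl (Subtype.ext h))
    · exact Or.inl (Or.inr (Subtype.ext h))
    · exact Or.inr h
  have hq₂ : q₂ ∈ Nprime := by
    rcases hn2 with h | h | h
    · exact Or.inl (Or.inl (Subtype.ext h))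
    · exact Or.inl (Or.inr (Subtype.ext h))
    · exact Or.inr h
  have key : (Matrix.GeneralLinearGroup.mkOfDetNeZero A hA,
      Matrix.GeneralLinearGroup.mkOfDetNeZero B hB)
      = (Matrix.SpecialLinearGroup.toGL q₁, Matrix.SpecialLinearGroup.toGL q₂)
        * (Matrix.SpecialLinearGroup.toGL Tmat, Matrix.SpecialLinearGroup.toGL Tmat) ^ (i : ℕ)
        * (D0, D0) ^ (ε : ℕ) := by
    refine Prod.ext (Units.ext ?_) (Units.ext ?_) <;>
      simp only [Units.val_mul, Units.val_pow_eq_pow_val]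
    · exact hA'
    · exact hB'
  rw [key]
  refine mul_mem (mul_mem (Subgroup.subset_closure ?_)
      (pow_mem (Subgroup.subset_closure ?_) _)) (pow_mem (Subgroup.subset_closure ?_) _)
  · exact Or.inl (Or.inl ⟨q₁, hq₁, q₂, hq₂, rfl⟩)
  · exact Or.inl (Or.inr rfl)
  · exact Or.inr rfl

lemma zmod3_cases (x : ZMod 3) : x = 0 ∨ x = 1 ∨ x = 2 := by revert x; decide

/-- Let `d₁, d₂` be integers not divisible by `3`, and for `j = 1, 2` let
`M_j := α_j·I + β_j·[[0, (d_j − 1)·4⁻¹],[1, −1]]` over `𝔽₃`. If `det M₁ = det M₂ ≠ 0`, then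
the pair `(M₁, M₂)` lies in the subgroup of `GL₂(𝔽₃) × GL₂(𝔽₃)` generated by
`{(u, v) : u, v ∈ N′} ∪ {(T, T)} ∪ {(D₀, D₀)}`. -/
theorem pair_mem_closure_genPairs (d₁ d₂ : ℤ) (h₁ : ¬ (3 : ℤ) ∣ d₁) (h₂ : ¬ (3 : ℤ) ∣ d₂)
    (α₁ β₁ α₂ β₂ : ZMod 3) (M₁ M₂ : Matrix (Fin 2) (Fin 2) (ZMod 3))
    (hM₁ : M₁ = α₁ • (1 : Matrix (Fin 2) (Fin 2) (ZMod 3))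
        + β₁ • !![0, ((d₁ : ZMod 3) - 1) * (4 : ZMod 3)⁻¹; 1, -1])
    (hM₂ : M₂ = α₂ • (1 : Matrix (Fin 2) (Fin 2) (ZMod 3))
        + β₂ • !![0, ((d₂ : ZMod 3) - 1) * (4 : ZMod 3)⁻¹; 1, -1])
    (hdet : M₁.det = M₂.det) (hne : M₁.det ≠ 0) :
    (Matrix.GeneralLinearGroup.mkOfDetNeZero M₁ hne,
      Matrix.GeneralLinearGroup.mkOfDetNeZero M₂ (hdet ▸ hne))
      ∈ Subgroup.closure genPairs := by
  have h4 : ((4 : ZMod 3))⁻¹ = 1 := by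
    rw [show (4 : ZMod 3) = 1 from by decide, inv_one]
  rw [h4] at hM₁ hM₂
  have e₁ : (d₁ : ZMod 3) = 1 ∨ (d₁ : ZMod 3) = 2 := by
    have h0 : (d₁ : ZMod 3) ≠ 0 := fun h => h₁ ((ZMod.intCast_zmod_eq_zero_iff_dvd d₁ 3).mp h)
    rcases zmod3_cases (d₁ : ZMod 3) with h | h | h
    · exact absurd h h0
    · exact Or.inl h
    · exact Or.inr h
  have e₂ : (d₂ : ZMod 3) = 1 ∨ (d₂ : ZMod 3) = 2 := by
    have h0 : (d₂ : ZMod 3) ≠ 0 := fun h => h₂ ((ZMod.intCast_zmod_eq_zero_iff_dvd d₂ 3).mp h)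
    rcases zmod3_cases (d₂ : ZMod 3) with h | h | h
    · exact absurd h h0
    · exact Or.inl h
    · exact Or.inr h
  rcases e₁ with e₁ | e₁ <;> rw [e₁] at hM₁ <;>
  rcases e₂ with e₂ | e₂ <;> rw [e₂] at hM₂ <;>
  subst hM₁ <;> subst hM₂ <;>
  rcases zmod3_cases α₁ with rfl | rfl | rfl <;>
  rcases zmod3_cases β₁ with rfl | rfl | rfl <;>
  rcases zmod3_cases α₂ with rfl | rfl | rfl <;>
  rcases zmod3_cases β₂ with rfl | rfl | rfl <;>
  first
  | exact absurd (by decide) hne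
  | exact absurd hdet (by decide)
  | exact master _ _ hne (hdet ▸ hne) (by decide)
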